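/- The local rate function L is jointly lower semicontinuous in (x,D): if (x⁽ⁿ⁾, D⁽ⁿ⁾) is a sequence in ℝ₊^R × ℝ^R converging to (x,D), with D⁽ⁿ⁾_ij ≥ 0 for all ij ∉ Λ(x⁽ⁿ⁾) and all n, and D_ij ≥ 0 for all ij ∉ Λ(x), then liminf_{n→∞} L(x⁽ⁿ⁾, D⁽ⁿ⁾) ≥ L(x, D). -/

import Mathlib

open Classical Filter MeasureTheory
open scoped ENNReal

noncomputable section

/-- The M/M/1 cost `l(D‖λ,μ)` that a suitably normalized `M/M/1` queue with arrival rate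
`λ` and service rate `μ` follows the drift `D`.  (Lean's conventions `Real.log 0 = 0` and
`0 * y = 0` implement the convention `0 · log 0 = 0`.) -/
def mmCost (D lam mu : ℝ) : ℝ :=
  D * Real.log ((D + Real.sqrt (D ^ 2 + 4 * lam * mu)) / (2 * lam))
    + lam + mu - Real.sqrt (D ^ 2 + 4 * lam * mu)

/-- The relative entropy `I_p(ν‖λ)` of Poisson processes of intensities `ν` and `λ`.
(Lean's conventions `x / 0 = 0`, `Real.log 0 = 0` and `0 * y = 0` implement the
conventions `0/0 = 0` and `0 · log 0 = 0`.) -/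
def poissonEntropy (nu lam : ℝ) : ℝ := nu * Real.log (nu / lam) - nu + lam

/-- A star network: a finite set `S` of channels with capacities `C i > 0`, and a set `R`
of routes, each route `r` being an unordered pair of distinct channels
`{fst r, snd r}`, with arrival rates `lam r > 0` and service parameters `mu r > 0`. -/
structure StarNetwork (S R : Type*) where
  /-- one endpoint of a route -/
  fst : R → S
  /-- the other endpoint of a route -/
  snd : R → S
  fst_ne_snd : ∀ r, fst r ≠ snd r
  /-- the capacity of each channel -/
  C : S → ℝ
  C_pos : ∀ i, 0 < C i
  /-- the arrival rate on each route -/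
  lam : R → ℝ
  lam_pos : ∀ r, 0 < lam r
  /-- the service parameter of each route -/
  mu : R → ℝ
  mu_pos : ∀ r, 0 < mu r

namespace StarNetwork

variable {S R : Type*} [Fintype S] [Fintype R]

/-- `N.touches i r` means that channel `i` is one of the two endpoints of route `r`. -/
def touches (N : StarNetwork S R) (i : S) (r : R) : Prop :=
  N.fst r = i ∨ N.snd r = i

/-- The load `x_i = ∑_{j : ij ∈ R} x_ij` of channel `i`. -/
def load (N : StarNetwork S R) (x : R → ℝ) (i : S) : ℝ :=
  ∑ r : R, if N.touches i r then x r else 0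

/-- The service rate `μ_ij(x) = μ_ij · x_ij · min (C_i / x_i) (C_j / x_j)` if `x_ij > 0`,
and `μ_ij(x) = 0` if `x_ij = 0`. -/
def srv (N : StarNetwork S R) (x : R → ℝ) (r : R) : ℝ :=
  if 0 < x r then
    N.mu r * x r *
      min (N.C (N.fst r) / N.load x (N.fst r)) (N.C (N.snd r) / N.load x (N.snd r))
  else 0

/-- The face `Λ(x) = {ij ∈ R : x_ij > 0}` of saturated routes. -/
def face (N : StarNetwork S R) (x : R → ℝ) : Set R := {r | 0 < x r}

/-- The jammed routes `Λ₁(x)`: routes `ij` with `x_ij = 0` such that some route of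
`Λ(x)` contains `i` or contains `j`. -/
def jammed (N : StarNetwork S R) (x : R → ℝ) : Set R :=
  {r | x r = 0 ∧ ∃ r' ∈ N.face x, N.touches (N.fst r) r' ∨ N.touches (N.snd r) r'}

/-- The ergodic routes `Λ₂(x) = R \ (Λ(x) ∪ Λ₁(x))`. -/
def ergodicRoutes (N : StarNetwork S R) (x : R → ℝ) : Set R :=
  (N.face x ∪ N.jammed x)ᶜ

/-- The local rate function `L(x, D) = ∑_{ij ∈ Λ(x) ∪ Λ₁(x)} l(D_ij ‖ λ_ij, μ_ij(x))`
(its finite part; `L(x,D) = +∞` when `D_ij < 0` for some `ij ∉ Λ(x)`). -/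
def locRate (N : StarNetwork S R) (x D : R → ℝ) : ℝ :=
  ∑ r : R, if r ∈ N.face x ∪ N.jammed x then mmCost (D r) (N.lam r) (N.srv x r) else 0

/-- The sample path rate function `I_T(φ) = ∫₀ᵀ L(φ(t), φ̇(t)) dt ∈ [0,∞]` if `φ` is
absolutely continuous on `[0,T]`, and `I_T(φ) = +∞` otherwise (the infimum over an
empty family is `⊤`; any two densities of `φ` coincide a.e. on `[0,T]`, so the
infimum is the common value of the integral). -/
def pathRate (N : StarNetwork S R) (T : ℝ) (φ : ℝ → R → ℝ) : ℝ≥0∞ :=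
  ⨅ (f : ℝ → R → ℝ) (_ : IntegrableOn f (Set.Icc 0 T))
    (_ : ∀ t ∈ Set.Icc (0 : ℝ) T, φ t = φ 0 + ∫ s in (0 : ℝ)..t, f s),
    ∫⁻ t in Set.Ioc (0 : ℝ) T, ENNReal.ofReal (N.locRate (φ t) (f t))

end StarNetwork


private lemma pois_nonneg {lam y : ℝ} (hlam : 0 < lam) (hy : 0 ≤ y) :
    0 ≤ y * Real.log (y / lam) - y + lam := by
  rcases eq_or_lt_of_le hy with h | h
  · simp [← h]; positivity
  · have h1 : Real.log (lam / y) ≤ lam / y - 1 := Real.log_le_sub_one_of_pos (by positivity)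
    have h2 : Real.log (lam / y) = - Real.log (y / lam) := by
      rw [← Real.log_inv]; congr 1; field_simp
    have h3 : y * (lam / y - 1) = lam - y := by field_simp
    nlinarith [mul_le_mul_of_nonneg_left h1 h.le]

private lemma sqrt_gt_abs {D lam mu : ℝ} (h : 0 < 4 * lam * mu) :
    |D| < Real.sqrt (D ^ 2 + 4 * lam * mu) := by
  have := Real.sqrt_lt_sqrt (sq_nonneg D) (by linarith : D ^ 2 < D ^ 2 + 4 * lam * mu)
  rwa [Real.sqrt_sq_eq_abs] at this

private lemma mmCost_nonneg {D lam mu : ℝ} (hlam : 0 < lam) (hmu : 0 ≤ mu)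
    (hdom : 0 < mu ∨ 0 ≤ D) : 0 ≤ mmCost D lam mu := by
  rcases eq_or_lt_of_le hmu with hmu0 | hmu0
  · have hD : 0 ≤ D := hdom.resolve_left (by rw [← hmu0]; exact lt_irrefl 0)
    rw [mmCost, ← hmu0]
    have h1 : D ^ 2 + 4 * lam * 0 = D ^ 2 := by ring
    rw [h1, Real.sqrt_sq hD]
    have h2 : (D + D) / (2 * lam) = D / lam := by field_simp; try ring
    rw [h2]
    have := pois_nonneg hlam hD
    linarith
  · set s := Real.sqrt (D ^ 2 + 4 * lam * mu) with hs
    have hs2 : s ^ 2 = D ^ 2 + 4 * lam * mu := Real.sq_sqrt (by positivity)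
    have hsD : |D| < s := sqrt_gt_abs (by positivity)
    have habs := abs_le.1 hsD.le
    have hnu : 0 < (D + s) / 2 := by cases' abs_lt.1 hsD with h _; linarith
    set nu := (D + s) / 2 with hnud
    have hkey : nu ^ 2 = D * nu + lam * mu := by rw [hnud]; nlinarith
    set w := lam * mu / nu with hwd
    have hw : 0 < w := by positivity
    have hDw : D = nu - w := by rw [hwd]; field_simp; nlinarith
    have hsw : s = nu + w := by rw [hwd]; field_simp; nlinarith
    have hratio : (D + s) / (2 * lam) = nu / lam := by
      rw [hnud]; field_simp; try ring
    have hlog : Real.log (w / mu) = - Real.log (nu / lam) := by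
      have : w / mu = lam / nu := by rw [hwd]; field_simp; try ring
      rw [this, ← Real.log_inv]; congr 1; field_simp
    have e : mmCost D lam mu =
        (nu * Real.log (nu / lam) - nu + lam) + (w * Real.log (w / mu) - w + mu) := by
      rw [mmCost, ← hs, hratio, hlog, hsw]
      nth_rewrite 1 [hDw]
      ring
    rw [e]
    have := pois_nonneg hlam hnu.le
    have := pois_nonneg hmu0 hw.le
    linarith

private lemma mmCost_tendsto {lam D mu : ℝ} (hlam : 0 < lam)
    (ht : 0 < D + Real.sqrt (D ^ 2 + 4 * lam * mu))
    {Dn mn : ℕ → ℝ} (hDn : Tendsto Dn atTop (nhds D)) (hmn : Tendsto mn atTop (nhds mu)) :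
    Tendsto (fun n => mmCost (Dn n) lam (mn n)) atTop (nhds (mmCost D lam mu)) := by
  have h1 : Tendsto (fun n => Real.sqrt ((Dn n) ^ 2 + 4 * lam * (mn n))) atTop
      (nhds (Real.sqrt (D ^ 2 + 4 * lam * mu))) :=
    (Real.continuous_sqrt.tendsto _).comp ((hDn.pow 2).add (hmn.const_mul (4 * lam)))
  have h2 : Tendsto (fun n => (Dn n + Real.sqrt ((Dn n) ^ 2 + 4 * lam * (mn n))) / (2 * lam))
      atTop (nhds ((D + Real.sqrt (D ^ 2 + 4 * lam * mu)) / (2 * lam))) :=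
    (hDn.add h1).div_const _
  have h3 : Tendsto
      (fun n => Real.log ((Dn n + Real.sqrt ((Dn n) ^ 2 + 4 * lam * (mn n))) / (2 * lam)))
      atTop (nhds (Real.log ((D + Real.sqrt (D ^ 2 + 4 * lam * mu)) / (2 * lam)))) :=
    ((Real.continuousAt_log (by positivity)).tendsto).comp h2
  simpa [mmCost] using (((hDn.mul h3).add_const lam).add hmn).sub h1

private lemma log_term_bound {lam D mu : ℝ} (hlam : 0 < lam) (hmu : 0 ≤ mu)
    (hlt : D + Real.sqrt (D ^ 2 + 4 * lam * mu) ≤ 2 * lam) :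
    max D 0 * Real.log (max D 0 / lam) ≤
      D * Real.log ((D + Real.sqrt (D ^ 2 + 4 * lam * mu)) / (2 * lam)) := by
  have hsabs : |D| ≤ Real.sqrt (D ^ 2 + 4 * lam * mu) := by
    rw [← Real.sqrt_sq_eq_abs]
    exact Real.sqrt_le_sqrt (by nlinarith)
  have habs := abs_le.1 hsabs
  rcases le_or_gt D 0 with hD | hD
  · rw [max_eq_right hD]
    simp only [zero_mul]
    have hnum : 0 ≤ D + Real.sqrt (D ^ 2 + 4 * lam * mu) := by linarith
    have hlog : Real.log ((D + Real.sqrt (D ^ 2 + 4 * lam * mu)) / (2 * lam)) ≤ 0 :=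
      Real.log_nonpos (by positivity) (by rw [div_le_one (by positivity)]; linarith)
    nlinarith [mul_nonneg (neg_nonneg.2 hD) (neg_nonneg.2 hlog)]
  · rw [max_eq_left hD.le]
    have h2D : 2 * D ≤ D + Real.sqrt (D ^ 2 + 4 * lam * mu) := by
      have : D ≤ |D| := le_abs_self D
      linarith
    have hlog : Real.log (D / lam) ≤
        Real.log ((D + Real.sqrt (D ^ 2 + 4 * lam * mu)) / (2 * lam)) := by
      apply Real.log_le_log (by positivity)
      rw [div_le_div_iff₀ (by positivity) (by positivity)]
      nlinarith
    exact mul_le_mul_of_nonneg_left hlog hD.le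

private lemma tendsto_max_mul_log {lam : ℝ} (hlam : 0 < lam) {Dn : ℕ → ℝ}
    (h : Tendsto Dn atTop (nhds 0)) :
    Tendsto (fun n => max (Dn n) 0 * Real.log (max (Dn n) 0 / lam)) atTop (nhds 0) := by
  have hmax : Tendsto (fun n => max (Dn n) 0) atTop (nhds 0) := by
    have : Tendsto (fun n => max (Dn n) 0) atTop (nhds (max 0 0)) :=
      h.max tendsto_const_nhds
    simpa using this
  have key : ∀ y : ℝ, y * Real.log (y / lam) = y * Real.log y - Real.log lam * y := by
    intro y
    rcases eq_or_ne y 0 with rfl | hy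
    · simp
    · rw [Real.log_div hy hlam.ne']; ring
  simp only [key]
  have h1 : Tendsto (fun n => (max (Dn n) 0) * Real.log (max (Dn n) 0)) atTop (nhds 0) := by
    have := (Real.continuous_mul_log.tendsto 0).comp hmax
    simpa [Function.comp_def] using this
  have h2 : Tendsto (fun n => Real.log lam * max (Dn n) 0) atTop (nhds 0) := by
    simpa using hmax.const_mul (Real.log lam)
  simpa using h1.sub h2

namespace StarNetwork

variable {S R : Type*} [Fintype S] [Fintype R]

private lemma load_nonneg (N : StarNetwork S R) {x : R → ℝ} (hx : ∀ r, 0 ≤ x r) (i : S) :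
    0 ≤ N.load x i :=
  Finset.sum_nonneg fun r _ => by split <;> [exact hx r; exact le_rfl]

private lemma le_load (N : StarNetwork S R) {x : R → ℝ} (hx : ∀ r, 0 ≤ x r) {i : S} {r : R}
    (h : N.touches i r) : x r ≤ N.load x i := by
  have := Finset.single_le_sum (f := fun r' => if N.touches i r' then x r' else 0)
    (fun r' _ => by by_cases h' : N.touches i r' <;> simp [h', hx r']) (Finset.mem_univ r)
  simpa [h, StarNetwork.load] using this

private lemma touches_fst (N : StarNetwork S R) (r : R) : N.touches (N.fst r) r := Or.inl rfl
private lemma touches_snd (N : StarNetwork S R) (r : R) : N.touches (N.snd r) r := Or.inr rfl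

private lemma srv_nonneg (N : StarNetwork S R) {x : R → ℝ} (hx : ∀ r, 0 ≤ x r) (r : R) :
    0 ≤ N.srv x r := by
  rw [StarNetwork.srv]
  split
  · refine mul_nonneg (mul_nonneg (N.mu_pos r).le (hx r)) (le_min ?_ ?_) <;>
      exact div_nonneg (N.C_pos _).le (N.load_nonneg hx _)
  · exact le_rfl

private lemma srv_pos (N : StarNetwork S R) {x : R → ℝ} (hx : ∀ r, 0 ≤ x r) {r : R}
    (h : 0 < x r) : 0 < N.srv x r := by
  rw [StarNetwork.srv, if_pos h]
  have h1 : 0 < N.load x (N.fst r) := lt_of_lt_of_le h (N.le_load hx (N.touches_fst r))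
  have h2 : 0 < N.load x (N.snd r) := lt_of_lt_of_le h (N.le_load hx (N.touches_snd r))
  have := N.C_pos (N.fst r); have := N.C_pos (N.snd r); have := N.mu_pos r
  positivity

private lemma srv_zero (N : StarNetwork S R) {x : R → ℝ} {r : R} (h : x r = 0) :
    N.srv x r = 0 := by rw [StarNetwork.srv, if_neg (by rw [h]; exact lt_irrefl 0)]

private lemma tendsto_load (N : StarNetwork S R) {xs : ℕ → R → ℝ} {x : R → ℝ}
    (hxr : ∀ r, Tendsto (fun n => xs n r) atTop (nhds (x r))) (i : S) :
    Tendsto (fun n => N.load (xs n) i) atTop (nhds (N.load x i)) := by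
  unfold StarNetwork.load
  refine tendsto_finset_sum _ fun r _ => ?_
  by_cases h : N.touches i r <;> simp only [h, if_true, if_false]
  · exact hxr r
  · exact tendsto_const_nhds

end StarNetwork

/-- The local rate function `L` is jointly lower semicontinuous in `(x,D)`: if
`(x⁽ⁿ⁾, D⁽ⁿ⁾)` is a sequence in `ℝ₊^R × ℝ^R` converging to `(x,D)`, with `D⁽ⁿ⁾_ij ≥ 0`
for all `ij ∉ Λ(x⁽ⁿ⁾)` and all `n`, and `D_ij ≥ 0` for all `ij ∉ Λ(x)`, then
`liminf_{n→∞} L(x⁽ⁿ⁾, D⁽ⁿ⁾) ≥ L(x, D)`. -/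
theorem locRate_lowerSemicontinuous {S R : Type*} [Fintype S] [Fintype R]
    (N : StarNetwork S R) (x D : R → ℝ) (xs Ds : ℕ → R → ℝ)
    (hx : ∀ r, 0 ≤ x r) (hxs : ∀ n r, 0 ≤ xs n r)
    (hconv : Tendsto (fun n => (xs n, Ds n)) atTop (nhds (x, D)))
    (hDs : ∀ n, ∀ r ∉ N.face (xs n), 0 ≤ Ds n r)
    (hD : ∀ r ∉ N.face x, 0 ≤ D r) :
    (N.locRate x D : EReal) ≤
      Filter.liminf (fun n => (N.locRate (xs n) (Ds n) : EReal)) atTop := by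
  classical
  have hxsn : Tendsto xs atTop (nhds x) := by
    have := (continuous_fst.tendsto (x, D)).comp hconv
    simpa [Function.comp_def] using this
  have hDsn : Tendsto Ds atTop (nhds D) := by
    have := (continuous_snd.tendsto (x, D)).comp hconv
    simpa [Function.comp_def] using this
  have hxr : ∀ r, Tendsto (fun n => xs n r) atTop (nhds (x r)) :=
    fun r => ((continuous_apply r).tendsto x).comp hxsn
  have hDr : ∀ r, Tendsto (fun n => Ds n r) atTop (nhds (D r)) :=
    fun r => ((continuous_apply r).tendsto D).comp hDsn
  have key : ∀ r : R, ∃ G : ℕ → ℝ,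
      Tendsto G atTop (nhds (if r ∈ N.face x ∪ N.jammed x then
        mmCost (D r) (N.lam r) (N.srv x r) else 0)) ∧
      (∀ᶠ n in atTop, G n ≤ if r ∈ N.face (xs n) ∪ N.jammed (xs n) then
        mmCost (Ds n r) (N.lam r) (N.srv (xs n) r) else 0) := by
    intro r
    by_cases hface : r ∈ N.face x
    · -- r is in the face of x
      have hxrpos : 0 < x r := hface
      have hevpos : ∀ᶠ n in atTop, 0 < xs n r :=
        (hxr r).eventually (eventually_gt_nhds hxrpos)
      have hld1 : 0 < N.load x (N.fst r) :=
        lt_of_lt_of_le hxrpos (N.le_load hx (N.touches_fst r))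
      have hld2 : 0 < N.load x (N.snd r) :=
        lt_of_lt_of_le hxrpos (N.le_load hx (N.touches_snd r))
      have hmain : Tendsto (fun n => N.mu r * xs n r *
          min (N.C (N.fst r) / N.load (xs n) (N.fst r))
            (N.C (N.snd r) / N.load (xs n) (N.snd r))) atTop
          (nhds (N.mu r * x r * min (N.C (N.fst r) / N.load x (N.fst r))
            (N.C (N.snd r) / N.load x (N.snd r)))) :=
      ((hxr r).const_mul (N.mu r)).mul
        ((tendsto_const_nhds.div (N.tendsto_load hxr (N.fst r)) hld1.ne').min
          (tendsto_const_nhds.div (N.tendsto_load hxr (N.snd r)) hld2.ne'))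
      have hsrv : Tendsto (fun n => N.srv (xs n) r) atTop (nhds (N.srv x r)) := by
        have hev : ∀ᶠ n in atTop, (fun n => N.mu r * xs n r *
            min (N.C (N.fst r) / N.load (xs n) (N.fst r))
              (N.C (N.snd r) / N.load (xs n) (N.snd r))) n = N.srv (xs n) r := by
          filter_upwards [hevpos] with n hn
          rw [StarNetwork.srv, if_pos hn]
        have heq : N.srv x r = N.mu r * x r * min (N.C (N.fst r) / N.load x (N.fst r))
            (N.C (N.snd r) / N.load x (N.snd r)) := by
          rw [StarNetwork.srv, if_pos hxrpos]
        rw [heq]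
        exact hmain.congr' hev
      have hsrvpos : 0 < N.srv x r := N.srv_pos hx hxrpos
      have ht : 0 < D r + Real.sqrt ((D r) ^ 2 + 4 * N.lam r * N.srv x r) := by
        have h := sqrt_gt_abs (D := D r)
          (show 0 < 4 * N.lam r * N.srv x r by
            have := N.lam_pos r; positivity)
        have := neg_abs_le (D r)
        linarith
      refine ⟨fun n => mmCost (Ds n r) (N.lam r) (N.srv (xs n) r), ?_, ?_⟩
      · rw [if_pos (Set.mem_union_left _ hface)]
        exact mmCost_tendsto (N.lam_pos r) ht (hDr r) hsrv
      · filter_upwards [hevpos] with n hn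
        rw [if_pos (Set.mem_union_left _ (show r ∈ N.face (xs n) from hn))]
    · by_cases hjam : r ∈ N.jammed x
      · -- r is jammed for x
        have hjammem : r ∈ N.face x ∪ N.jammed x := Set.mem_union_right _ hjam
        obtain ⟨hx0, r', hr'face, htch⟩ := hjam
        have hr'pos : 0 < x r' := hr'face
        obtain ⟨i, hitouch⟩ : ∃ i, N.touches i r ∧ N.touches i r' := by
          rcases htch with h | h
          · exact ⟨N.fst r, N.touches_fst r, h⟩
          · exact ⟨N.snd r, N.touches_snd r, h⟩
        have hldpos : 0 < N.load x i := lt_of_lt_of_le hr'pos (N.le_load hx hitouch.2)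
        have hD0 : 0 ≤ D r := hD r hface
        -- srv (xs n) r → 0
        have hsrv0 : Tendsto (fun n => N.srv (xs n) r) atTop (nhds 0) := by
          have hgb : Tendsto (fun n => N.mu r * xs n r * (N.C i / N.load (xs n) i))
              atTop (nhds (N.mu r * x r * (N.C i / N.load x i))) :=
            ((hxr r).const_mul (N.mu r)).mul
              (tendsto_const_nhds.div (N.tendsto_load hxr i) hldpos.ne')
          rw [hx0] at hgb
          simp only [mul_zero, zero_mul] at hgb
          refine squeeze_zero (fun n => N.srv_nonneg (hxs n) r) (fun n => ?_) hgb
          by_cases hp : 0 < xs n r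
          · rw [StarNetwork.srv, if_pos hp]
            refine mul_le_mul_of_nonneg_left ?_
              (mul_nonneg (N.mu_pos r).le (hxs n r))
            rcases hitouch.1 with hi | hi <;> rw [← hi]
            · exact min_le_left _ _
            · exact min_le_right _ _
          · have hz : xs n r = 0 := le_antisymm (not_lt.1 hp) (hxs n r)
            rw [N.srv_zero hz, hz]
            simp
        -- eventually the route is in face ∪ jammed of xs n
        have hevmem : ∀ᶠ n in atTop, r ∈ N.face (xs n) ∪ N.jammed (xs n) := by
          filter_upwards [(hxr r').eventually (eventually_gt_nhds hr'pos)] with n hn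
          rcases (hxs n r).lt_or_eq with hp | hp
          · exact Set.mem_union_left _ hp
          · exact Set.mem_union_right _ ⟨hp.symm, r', hn, htch⟩
        have hsrvx0 : N.srv x r = 0 := N.srv_zero hx0
        rcases eq_or_lt_of_le hD0 with hd0 | hd0
        · -- D r = 0
          refine ⟨fun n => max (Ds n r) 0 * Real.log (max (Ds n r) 0 / N.lam r)
            + N.lam r + N.srv (xs n) r
            - Real.sqrt ((Ds n r) ^ 2 + 4 * N.lam r * N.srv (xs n) r), ?_, ?_⟩
          · rw [if_pos hjammem]
            have hDr0 : Tendsto (fun n => Ds n r) atTop (nhds 0) := by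
              rw [hd0]; exact hDr r
            have h1 := tendsto_max_mul_log (N.lam_pos r) hDr0
            have h2 : Tendsto (fun n =>
                Real.sqrt ((Ds n r) ^ 2 + 4 * N.lam r * N.srv (xs n) r)) atTop (nhds 0) := by
              have h0 : Tendsto (fun n => (Ds n r) ^ 2 + 4 * N.lam r * N.srv (xs n) r)
                  atTop (nhds 0) := by
                simpa using (hDr0.pow 2).add (hsrv0.const_mul (4 * N.lam r))
              have := (Real.continuous_sqrt.tendsto (0:ℝ)).comp h0
              simpa [Function.comp_def] using this
            have htarget : mmCost (D r) (N.lam r) (N.srv x r) = N.lam r := by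
              rw [← hd0, hsrvx0]
              simp [mmCost]
            rw [htarget]
            have := ((h1.add_const (N.lam r)).add hsrv0).sub h2
            simpa using this
          · have htn : Tendsto (fun n => Ds n r +
                Real.sqrt ((Ds n r) ^ 2 + 4 * N.lam r * N.srv (xs n) r)) atTop (nhds 0) := by
              have hDr0 : Tendsto (fun n => Ds n r) atTop (nhds 0) := by
                rw [hd0]; exact hDr r
              have h2 : Tendsto (fun n =>
                  Real.sqrt ((Ds n r) ^ 2 + 4 * N.lam r * N.srv (xs n) r)) atTop (nhds 0) := by
                have h0 : Tendsto (fun n => (Ds n r) ^ 2 + 4 * N.lam r * N.srv (xs n) r)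
                    atTop (nhds 0) := by
                  simpa using (hDr0.pow 2).add (hsrv0.const_mul (4 * N.lam r))
                have := (Real.continuous_sqrt.tendsto (0:ℝ)).comp h0
                simpa [Function.comp_def] using this
              simpa using hDr0.add h2
            have hev2 : ∀ᶠ n in atTop, Ds n r +
                Real.sqrt ((Ds n r) ^ 2 + 4 * N.lam r * N.srv (xs n) r) < 2 * N.lam r :=
              htn.eventually (eventually_lt_nhds (by have := N.lam_pos r; linarith))
            filter_upwards [hevmem, hev2] with n hn1 hn2
            rw [if_pos hn1, mmCost]
            have := log_term_bound (N.lam_pos r) (N.srv_nonneg (hxs n) r) hn2.le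
            linarith
        · -- D r > 0
          refine ⟨fun n => mmCost (Ds n r) (N.lam r) (N.srv (xs n) r), ?_, ?_⟩
          · rw [if_pos hjammem]
            have ht : 0 < D r + Real.sqrt ((D r) ^ 2 + 4 * N.lam r * N.srv x r) := by
              have : Real.sqrt ((D r) ^ 2 + 4 * N.lam r * N.srv x r) = D r := by
                rw [hsrvx0, show (D r) ^ 2 + 4 * N.lam r * 0 = (D r) ^ 2 by ring,
                  Real.sqrt_sq hD0]
              rw [this]; linarith
            have hsrv : Tendsto (fun n => N.srv (xs n) r) atTop (nhds (N.srv x r)) := by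
              rw [hsrvx0]; exact hsrv0
            exact mmCost_tendsto (N.lam_pos r) ht (hDr r) hsrv
          · filter_upwards [hevmem] with n hn
            rw [if_pos hn]
      · -- ergodic route
        refine ⟨fun _ => 0, ?_, ?_⟩
        · rw [if_neg (by rintro (h | h) <;> [exact hface h; exact hjam h])]
          exact tendsto_const_nhds
        · refine Filter.Eventually.of_forall fun n => ?_
          by_cases hmem : r ∈ N.face (xs n) ∪ N.jammed (xs n)
          · rw [if_pos hmem]
            refine mmCost_nonneg (N.lam_pos r) (N.srv_nonneg (hxs n) r) ?_
            by_cases hp : 0 < xs n r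
            · exact Or.inl (N.srv_pos (hxs n) hp)
            · exact Or.inr (hDs n r hp)
          · rw [if_neg hmem]
  choose G hG1 hG2 using key
  have hg : Tendsto (fun n => ∑ r : R, G r n) atTop (nhds (N.locRate x D)) := by
    rw [StarNetwork.locRate]
    exact tendsto_finset_sum _ fun r _ => hG1 r
  have hfg : ∀ᶠ n in atTop, (∑ r : R, G r n) ≤ N.locRate (xs n) (Ds n) := by
    filter_upwards [eventually_all.2 hG2] with n hn
    rw [StarNetwork.locRate]
    exact Finset.sum_le_sum fun r _ => hn r
  have hgE : Tendsto (fun n => ((∑ r : R, G r n : ℝ) : EReal)) atTop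
      (nhds ((N.locRate x D : ℝ) : EReal)) :=
    (continuous_coe_real_ereal.tendsto _).comp hg
  rw [← hgE.liminf_eq]
  refine liminf_le_liminf ?_
  filter_upwards [hfg] with n hn
  exact EReal.coe_le_coe_iff.2 hn
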